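/- Let N ≥ 2 and K be integers with 1 ≤ K ≤ N − 1, let R > K·c > 0, and let F : [0,1] → [0,1] be a continuous, strictly increasing CDF with F(0) = 0 and F(1) = 1. Define T(x) = Σ_{j=0}^{K−1} C(N−1, j) F(x)^{N−1−j} (1−F(x))^j, and let x* ∈ (0,1) satisfy T(x*) = c·K/R. For q ∈ [x*, 1] define P(q) = Σ_{n=0}^{N−K−1} C(N−1, n) F(x*)^n · Σ_{j=0}^{K−1} C(N−n−1, j) (F(q) − F(x*))^{N−1−n−j} (1−F(q))^j + Σ_{n=N−K}^{N−1} C(N−1, n) F(x*)^n (1−F(x*))^{N−1−n}. Then for every q with x* < q ≤ 1, P(q) > c·K/R. -/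

import Mathlib

open Finset

/-- The probability that a user contributing quality `x` is among the top `K`
of `N` users, when the other `N - 1` contributions are i.i.d. with CDF `F`. -/
noncomputable def topKProb (N K : ℕ) (F : ℝ → ℝ) (x : ℝ) : ℝ :=
  ∑ j ∈ Finset.range K,
    ((N - 1).choose j : ℝ) * F x ^ (N - 1 - j) * (1 - F x) ^ j

/-- The probability that a participating user of type `q ≥ x*` is among the top
`K` contributors in mechanism M5, when each of the other `N - 1` users has type
drawn from `F` and participates iff her type is at least the cut-off `xs`. -/
noncomputable def winProb (N K : ℕ) (F : ℝ → ℝ) (xs q : ℝ) : ℝ :=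
  (∑ n ∈ Finset.range (N - K), ((N - 1).choose n : ℝ) * F xs ^ n *
    ∑ j ∈ Finset.range K, ((N - n - 1).choose j : ℝ) *
      (F q - F xs) ^ (N - 1 - n - j) * (1 - F q) ^ j) +
  ∑ n ∈ Finset.Ico (N - K) N,
    ((N - 1).choose n : ℝ) * F xs ^ n * (1 - F xs) ^ (N - 1 - n)

theorem stmt_14 (N K : ℕ) (hN : 2 ≤ N) (hK : 1 ≤ K) (hKN : K ≤ N - 1)
    (R c : ℝ) (hc : 0 < c) (hR : (K : ℝ) * c < R)
    (F : ℝ → ℝ) (hFcont : ContinuousOn F (Set.Icc 0 1))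
    (hFmono : StrictMonoOn F (Set.Icc 0 1)) (hF0 : F 0 = 0) (hF1 : F 1 = 1)
    (xs : ℝ) (hxs : xs ∈ Set.Ioo (0 : ℝ) 1)
    (hroot : topKProb N K F xs = c * K / R) :
    ∀ q : ℝ, xs < q → q ≤ 1 → c * K / R < winProb N K F xs q := by
  intro q hq1 hq2
  have hxsm : xs ∈ Set.Icc (0:ℝ) 1 := ⟨hxs.1.le, hxs.2.le⟩
  have hqm : q ∈ Set.Icc (0:ℝ) 1 := ⟨le_trans hxs.1.le hq1.le, hq2⟩
  have h0m : (0:ℝ) ∈ Set.Icc (0:ℝ) 1 := by constructor <;> norm_num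
  have h1m : (1:ℝ) ∈ Set.Icc (0:ℝ) 1 := by constructor <;> norm_num
  have ha0 : 0 < F xs := by have := hFmono h0m hxsm hxs.1; rwa [hF0] at this
  have hd : 0 < F q - F xs := sub_pos.2 (hFmono hxsm hqm hq1)
  have he : (0:ℝ) ≤ 1 - F q := by
    have : F q ≤ F 1 := hFmono.monotoneOn hqm h1m hq2
    rw [hF1] at this; linarith
  have hS2 : ∑ n ∈ Finset.Ico (N - K) N,
      ((N-1).choose n : ℝ) * F xs ^ n * (1 - F xs) ^ (N-1-n) = topKProb N K F xs := by
    unfold topKProb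
    refine Finset.sum_nbij' (fun n => N - 1 - n) (fun j => N - 1 - j) ?_ ?_ ?_ ?_ ?_
    · intro n hn
      simp only [Finset.mem_Ico] at hn
      simp only [Finset.mem_range]
      omega
    · intro j hj
      simp only [Finset.mem_range] at hj
      simp only [Finset.mem_Ico]
      omega
    · intro n hn
      simp only [Finset.mem_Ico] at hn
      show N - 1 - (N - 1 - n) = n
      omega
    · intro j hj
      simp only [Finset.mem_range] at hj
      show N - 1 - (N - 1 - j) = j
      omega
    · intro n hn
      simp only [Finset.mem_Ico] at hn
      have h1 : n ≤ N - 1 := by omega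
      rw [Nat.choose_symm h1, Nat.sub_sub_self h1]
  have hS1 : 0 < ∑ n ∈ Finset.range (N - K), ((N - 1).choose n : ℝ) * F xs ^ n *
      ∑ j ∈ Finset.range K, ((N - n - 1).choose j : ℝ) *
        (F q - F xs) ^ (N - 1 - n - j) * (1 - F q) ^ j := by
    have hterm : ∀ n ∈ Finset.range (N - K), (0:ℝ) ≤ ((N - 1).choose n : ℝ) * F xs ^ n *
        ∑ j ∈ Finset.range K, ((N - n - 1).choose j : ℝ) *
          (F q - F xs) ^ (N - 1 - n - j) * (1 - F q) ^ j := by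
      intro n _
      apply mul_nonneg (mul_nonneg (Nat.cast_nonneg _) (pow_nonneg ha0.le _))
      apply Finset.sum_nonneg
      intro j _
      exact mul_nonneg (mul_nonneg (Nat.cast_nonneg _) (pow_nonneg hd.le _)) (pow_nonneg he _)
    refine Finset.sum_pos' hterm ⟨0, ?_, ?_⟩
    · simp only [Finset.mem_range]; omega
    · simp only [Nat.choose_zero_right, Nat.cast_one, pow_zero, one_mul, mul_one]
      refine Finset.sum_pos' ?_ ⟨0, ?_, ?_⟩
      · intro j _
        exact mul_nonneg (mul_nonneg (Nat.cast_nonneg _) (pow_nonneg hd.le _)) (pow_nonneg he _)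
      · simp only [Finset.mem_range]; omega
      · simp only [Nat.choose_zero_right, Nat.cast_one, pow_zero, one_mul, mul_one]
        exact pow_pos hd _
  unfold winProb
  rw [hS2, hroot]
  linarith
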